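/- Let F : A → B be a morphism of bottom-split simplicial objects in a category with pullbacks which is a right fibration (cartesian on all bottom face maps d₀). Then F is cartesian on every extra bottom degeneracy map s₋₁ : Aₙ → Aₙ₊₁ for n ≥ 0, and if A and B are augmented, F is also cartesian on the augmentation splitting s₋₁ : A₋₁ → A₀, i.e., the square with horizontal arrows the splittings s₋₁ : A₋₁ → A₀, s₋₁ : B₋₁ → B₀ and vertical arrows F₋₁, F₀ is a pullback. -/

import Mathlib

open CategoryTheory Simplicial Opposite

/-- A bottom-split augmented simplicial object: a simplicial object `X` with an augmentation
`q : X₀ → X₋₁`, extra bottom degeneracies `s₋₁ = sm n : Xₙ → Xₙ₊₁` splitting the bottom face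
maps, and a section `smA : X₋₁ → X₀` of the augmentation, satisfying the split-simplicial
identities. -/
structure BotSplitAug (C : Type*) [Category C] where
  X : SimplicialObject C
  pt : C
  q : X _⦋0⦌ ⟶ pt
  sm : ∀ n : ℕ, X _⦋n⦌ ⟶ X _⦋n+1⦌
  smA : pt ⟶ X _⦋0⦌
  sm_d0 : ∀ n : ℕ, sm n ≫ X.δ (0 : Fin (n + 2)) = 𝟙 _
  sm_d : ∀ (n : ℕ) (i : Fin (n + 2)), sm (n+1) ≫ X.δ i.succ = X.δ i ≫ sm n
  sm_s : ∀ (n : ℕ) (i : Fin (n + 1)), sm n ≫ X.σ i.succ = X.σ i ≫ sm (n+1)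
  smA_q : smA ≫ q = 𝟙 pt
  q_coeq : X.δ (0 : Fin 2) ≫ q = X.δ (1 : Fin 2) ≫ q
  sm_d1 : sm 0 ≫ X.δ (1 : Fin 2) = q ≫ smA
  smA_s : smA ≫ X.σ (0 : Fin 1) = smA ≫ sm 0

/-- Let `F : A → B` be a morphism of bottom-split (augmented) simplicial
objects in a category with pullbacks which is a right fibration (cartesian on all face maps
except the top ones, in particular on all bottom face maps).  Then `F` is cartesian on every
extra bottom degeneracy `s₋₁ : Aₙ → Aₙ₊₁` (`n ≥ 0`), and also on the augmentation splitting
`s₋₁ : A₋₁ → A₀`, i.e. the square with horizontal arrows the splittings and vertical arrows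
`F₋₁`, `F₀` is a pullback. -/
theorem rightFibration_cartesian_on_splittings {C : Type*} [Category C]
    [Limits.HasPullbacks C] (A B : BotSplitAug C)
    (F : A.X ⟶ B.X) (Fpt : A.pt ⟶ B.pt)
    -- `F` is a morphism of bottom-split augmented simplicial objects:
    (hq : F.app (op (SimplexCategory.mk 0)) ≫ B.q = A.q ≫ Fpt)
    (hsm : ∀ n : ℕ, A.sm n ≫ F.app (op (SimplexCategory.mk (n+1))) =
      F.app (op (SimplexCategory.mk n)) ≫ B.sm n)
    (hsmA : A.smA ≫ F.app (op (SimplexCategory.mk 0)) = Fpt ≫ B.smA)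
    -- `F` is a right fibration:
    (hright : ∀ (n : ℕ) (i : Fin (n + 2)), i ≠ Fin.last (n+1) →
      IsPullback (A.X.δ i) (F.app (op (SimplexCategory.mk (n+1))))
        (F.app (op (SimplexCategory.mk n))) (B.X.δ i)) :
    (∀ n : ℕ, IsPullback (A.sm n) (F.app (op (SimplexCategory.mk n)))
      (F.app (op (SimplexCategory.mk (n+1)))) (B.sm n)) ∧
    IsPullback A.smA Fpt (F.app (op (SimplexCategory.mk 0))) B.smA := by
  have hsm_pb : ∀ n : ℕ, IsPullback (A.sm n) (F.app (op (SimplexCategory.mk n)))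
      (F.app (op (SimplexCategory.mk (n+1)))) (B.sm n) := by
    intro n
    have h0 : (0 : Fin (n + 2)) ≠ Fin.last (n + 1) := by
      simp [Fin.ext_iff]
    refine IsPullback.of_right ?_ (hsm n) (hright n 0 h0)
    rw [A.sm_d0, B.sm_d0]
    exact IsPullback.of_horiz_isIso ⟨by simp⟩
  refine ⟨hsm_pb, ?_⟩
  -- Key computation: for any cone `(α, β)` over the augmentation square,
  -- `α ≫ q ≫ smA = α`.
  have key : ∀ {T : C} (α : T ⟶ A.X _⦋0⦌) (β : T ⟶ B.pt),
      α ≫ F.app (op (SimplexCategory.mk 0)) = β ≫ B.smA →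
      (α ≫ A.q) ≫ A.smA = α := by
    intro T α β h
    have w : (α ≫ A.X.σ 0) ≫ F.app (op (SimplexCategory.mk 1)) =
        (α ≫ F.app (op (SimplexCategory.mk 0))) ≫ B.sm 0 := by
      calc (α ≫ A.X.σ 0) ≫ F.app (op (SimplexCategory.mk 1))
          = α ≫ F.app (op (SimplexCategory.mk 0)) ≫ B.X.σ 0 := by
            rw [Category.assoc, SimplicialObject.σ_naturality]
        _ = β ≫ B.smA ≫ B.X.σ 0 := by rw [← Category.assoc, h, Category.assoc]
        _ = β ≫ B.smA ≫ B.sm 0 := by rw [B.smA_s]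
        _ = (α ≫ F.app (op (SimplexCategory.mk 0))) ≫ B.sm 0 := by
            rw [← Category.assoc, ← h, Category.assoc]
    set m := (hsm_pb 0).lift (α ≫ A.X.σ 0) (α ≫ F.app (op (SimplexCategory.mk 0))) w with hm
    have hm1 : m ≫ A.sm 0 = α ≫ A.X.σ 0 := (hsm_pb 0).lift_fst _ _ _
    have hσδ : A.X.σ (0 : Fin 1) ≫ A.X.δ (1 : Fin 2) = 𝟙 _ :=
      SimplicialObject.δ_comp_σ_succ' A.X (by rfl)
    have hαq : α ≫ A.q = m ≫ A.q := by
      have : A.sm 0 ≫ A.X.δ (1 : Fin 2) ≫ A.q = A.q := by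
        rw [← Category.assoc, A.sm_d1, Category.assoc, A.smA_q, Category.comp_id]
      calc α ≫ A.q = α ≫ (A.X.σ 0 ≫ A.X.δ (1 : Fin 2)) ≫ A.q := by
            rw [hσδ, Category.id_comp]
        _ = (m ≫ A.sm 0) ≫ A.X.δ (1 : Fin 2) ≫ A.q := by
            rw [hm1]; simp only [Category.assoc]
        _ = m ≫ A.q := by rw [Category.assoc, this]
    calc (α ≫ A.q) ≫ A.smA = m ≫ A.q ≫ A.smA := by rw [hαq, Category.assoc]
      _ = m ≫ A.sm 0 ≫ A.X.δ (1 : Fin 2) := by rw [A.sm_d1]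
      _ = (α ≫ A.X.σ 0) ≫ A.X.δ (1 : Fin 2) := by
          rw [← Category.assoc, hm1]
      _ = α := by rw [Category.assoc, hσδ, Category.comp_id]
  refine IsPullback.of_isLimit (Limits.PullbackCone.IsLimit.mk hsmA
    (fun s => s.fst ≫ A.q) (fun s => key s.fst s.snd s.condition) (fun s => ?_)
    (fun s m h1 h2 => ?_))
  · rw [Category.assoc, ← hq, ← Category.assoc, s.condition, Category.assoc, B.smA_q,
      Category.comp_id]
  · show m = s.fst ≫ A.q
    rw [← h1, Category.assoc, A.smA_q, Category.comp_id]
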